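/- If two regular spherical triangles have supplementary angles α and π − α with π/3 < α ≤ π/2, then the sum of their side lengths s(3,α) + s(3,π−α) is strictly greater than (a computable lower bound) approximately 0.608π; in particular it exceeds 3π/5. -/

import Mathlib

/-- Side length of a regular spherical `n`-gon with interior angle `α`. -/
noncomputable def sphericalSide (n : ℕ) (α : ℝ) : ℝ :=
  Real.arccos ((Real.cos (2 * Real.pi / (n : ℝ)) + Real.cos (α / 2) ^ 2) / Real.sin (α / 2) ^ 2)

set_option maxHeartbeats 1000000

open Real

/-- Cubic lower bound for sine on `[0,1]`. -/
lemma sin_ge_sub_cube6 {x : ℝ} (h0 : 0 ≤ x) (h1 : x ≤ 1) :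
    x - x ^ 3 / 6 ≤ Real.sin x := by
  have mono : MonotoneOn (fun y : ℝ => Real.sin y - (y - y ^ 3 / 6)) (Set.Icc 0 1) := by
    apply monotoneOn_of_deriv_nonneg (convex_Icc 0 1)
    · fun_prop
    · apply Differentiable.differentiableOn
      fun_prop
    · intro y _
      have hd : HasDerivAt (fun y : ℝ => Real.sin y - (y - y ^ 3 / 6))
          (Real.cos y - (1 - 3 * y ^ (3 - 1) / 6)) y := by
        exact (Real.hasDerivAt_sin y).sub ((hasDerivAt_id y).sub
          ((hasDerivAt_pow 3 y).div_const 6))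
      rw [hd.deriv]
      have := Real.one_sub_sq_div_two_le_cos (x := y)
      norm_num
      nlinarith [this]
  have h := mono (Set.mem_Icc.2 ⟨le_refl 0, zero_le_one⟩) (Set.mem_Icc.2 ⟨h0, h1⟩) h0
  simp [Real.sin_zero] at h
  linarith

/-- Numerical bound: `0.608 π < arccos (-1/3)`. -/
lemma numeric_arccos : 0.608 * Real.pi < Real.arccos (-(1/3)) := by
  have hπl : 3.141592 < Real.pi := Real.pi_gt_d6
  have hπu : Real.pi < 3.141593 := Real.pi_lt_d6
  set q : ℝ := 0.098 * Real.pi with hq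
  have hql : 0.307876016 ≤ q := by rw [hq]; nlinarith
  have hqu : q ≤ 0.307876114 := by rw [hq]; nlinarith
  have hq0 : 0 ≤ q := by linarith
  have hq1 : q ≤ 1 := by linarith
  -- lower bound for sin q
  have hs : (0.303011 : ℝ) < Real.sin q := by
    have h := sin_ge_sub_cube6 hq0 hq1
    have hcube : q ^ 3 ≤ (0.307876114 : ℝ) ^ 3 := by
      apply pow_le_pow_left₀ hq0 hqu
    nlinarith
  -- upper bound for cos (2q)
  have hc2 : Real.cos (2 * q) < 0.816369 := by
    have hid : Real.cos (2 * q) = 1 - 2 * Real.sin q ^ 2 := by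
      rw [Real.cos_two_mul]
      nlinarith [Real.sin_sq_add_cos_sq q]
    rw [hid]
    nlinarith
  have hc2nn : 0 ≤ Real.cos (2 * q) := by
    apply Real.cos_nonneg_of_mem_Icc
    constructor <;> [nlinarith; nlinarith]
  -- upper bound for cos (4q)
  have hc4 : Real.cos (4 * q) < 1/3 := by
    have hid : Real.cos (4 * q) = 2 * Real.cos (2 * q) ^ 2 - 1 := by
      rw [show (4 : ℝ) * q = 2 * (2 * q) by ring, Real.cos_two_mul]
    rw [hid]
    nlinarith
  -- conclude
  have hrel : (0.608 : ℝ) * Real.pi = Real.pi - 4 * q := by rw [hq]; ring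
  have hcos : -(1/3 : ℝ) < Real.cos (0.608 * Real.pi) := by
    rw [hrel, Real.cos_pi_sub]
    linarith
  have h1 : Real.arccos (Real.cos (0.608 * Real.pi)) = 0.608 * Real.pi :=
    Real.arccos_cos (by nlinarith) (by nlinarith)
  have h2 : Real.arccos (Real.cos (0.608 * Real.pi)) < Real.arccos (-(1/3)) := by
    have hmem1 : Real.arccos (Real.cos (0.608 * Real.pi)) ∈ Set.Icc 0 Real.pi :=
      ⟨Real.arccos_nonneg _, Real.arccos_le_pi _⟩
    have hmem2 : Real.arccos (-(1/3)) ∈ Set.Icc 0 Real.pi :=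
      ⟨Real.arccos_nonneg _, Real.arccos_le_pi _⟩
    have := Real.strictAntiOn_cos.lt_iff_gt hmem2 hmem1
    apply this.mp
    rw [Real.cos_arccos (by norm_num) (by norm_num),
        Real.cos_arccos (Real.neg_one_le_cos _) (Real.cos_le_one _)]
    exact hcos
  linarith [h1 ▸ h2]

/-- Core inequality. -/
lemma sum_gt {x : ℝ} (h1 : 1/2 ≤ x) (h2 : x < 3/4) :
    Real.arccos (-(1/3)) <
      Real.arccos ((x - 1/2) / (1 - x)) + Real.arccos ((1/2 - x) / x) := by
  have hx0 : (0 : ℝ) < x := by linarith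
  have h1x : (0 : ℝ) < 1 - x := by linarith
  set u : ℝ := (x - 1/2) / (1 - x) with hu
  set v : ℝ := (1/2 - x) / x with hv
  have hu0 : 0 ≤ u := div_nonneg (by linarith) h1x.le
  have hu1 : u < 1 := (div_lt_one h1x).2 (by linarith)
  have hv0 : v ≤ 0 := div_nonpos_of_nonpos_of_nonneg (by linarith) hx0.le
  have hv1 : -(1/3 : ℝ) < v := by
    rw [hv, lt_div_iff₀ hx0]; nlinarith
  set t : ℝ := Real.sqrt (4 * x - 1) with htd
  set s : ℝ := Real.sqrt 2 with hsd
  have ht2 : t ^ 2 = 4 * x - 1 := Real.sq_sqrt (by linarith)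
  have ht0 : 0 < t := Real.sqrt_pos.2 (by linarith)
  have hs2 : s ^ 2 = 2 := Real.sq_sqrt (by norm_num)
  have hs0 : 0 < s := Real.sqrt_pos.2 (by norm_num)
  -- key algebraic inequality
  have hkey : (2 * x - 1) * t < 2 * s * (1 - x) := by
    nlinarith [mul_pos (show (0:ℝ) < 3 - 4 * x by linarith)
        (show (0:ℝ) < 4 * x ^ 2 - 4 * x + 3 by nlinarith [sq_nonneg (2*x-1)]),
      mul_pos hs0 h1x, mul_nonneg (mul_nonneg (show (0:ℝ) ≤ 2*x-1 by linarith) ht0.le)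
        (mul_pos hs0 h1x).le, sq_nonneg (2 * s * (1 - x) - (2 * x - 1) * t)]
  -- sin of arccos v
  have hsinB : Real.sin (Real.arccos v) = t / (2 * x) := by
    rw [Real.sin_arccos]
    have : 1 - v ^ 2 = (t / (2 * x)) ^ 2 := by
      rw [hv]; field_simp; nlinarith [ht2]
    rw [this, Real.sqrt_sq (by positivity)]
  have hsinA : Real.sin (Real.arccos (-(1/3))) = 2 * s / 3 := by
    rw [Real.sin_arccos]
    have : 1 - (-(1/3) : ℝ) ^ 2 = (2 * s / 3) ^ 2 := by nlinarith [hs2]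
    rw [this, Real.sqrt_sq (by positivity)]
  have hcosB : Real.cos (Real.arccos v) = v :=
    Real.cos_arccos (by linarith) (by linarith)
  have hcosA : Real.cos (Real.arccos (-(1/3))) = -(1/3) :=
    Real.cos_arccos (by norm_num) (by norm_num)
  set A : ℝ := Real.arccos (-(1/3)) with hA
  set B : ℝ := Real.arccos v with hB
  -- B < A
  have hBA : B < A := by
    have hmem1 : A ∈ Set.Icc 0 Real.pi := ⟨Real.arccos_nonneg _, Real.arccos_le_pi _⟩
    have hmem2 : B ∈ Set.Icc 0 Real.pi := ⟨Real.arccos_nonneg _, Real.arccos_le_pi _⟩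
    exact (Real.strictAntiOn_cos.lt_iff_gt hmem1 hmem2).mp (by rw [hcosA, hcosB]; exact hv1)
  -- main comparison: cos (arccos u) < cos (A - B)
  have hfrac : u < -(1/3) * v + (2 * s / 3) * (t / (2 * x)) := by
    have heq : -(1/3) * v + (2 * s / 3) * (t / (2 * x)) = (x - 1/2 + s * t) / (3 * x) := by
      rw [hv]; field_simp; ring
    rw [heq, hu, div_lt_div_iff₀ h1x (by positivity)]
    nlinarith [mul_lt_mul_of_pos_right hkey ht0, ht2]
  have hcosAB : Real.cos (A - B) = -(1/3) * v + (2 * s / 3) * (t / (2 * x)) := by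
    rw [Real.cos_sub, hcosA, hcosB, hA, hB, hsinA, hsinB]
  have hABmem : A - B ∈ Set.Icc 0 Real.pi := by
    constructor
    · linarith
    · have := Real.arccos_le_pi (-(1/3 : ℝ))
      have := Real.arccos_nonneg v
      rw [hA, hB]; linarith [Real.arccos_le_pi (-(1/3 : ℝ)), Real.arccos_nonneg v]
  have humem : Real.arccos u ∈ Set.Icc 0 Real.pi := ⟨Real.arccos_nonneg _, Real.arccos_le_pi _⟩
  have hlt : A - B < Real.arccos u := by
    apply (Real.strictAntiOn_cos.lt_iff_gt humem hABmem).mp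
    rw [Real.cos_arccos (by linarith) (by linarith), hcosAB]
    exact hfrac
  linarith

theorem supp_triangle_pair_length (α : ℝ)
    (h₁ : Real.pi / 3 < α) (h₂ : α ≤ Real.pi / 2) :
    0.608 * Real.pi < sphericalSide 3 α + sphericalSide 3 (Real.pi - α) ∧
      3 * Real.pi / 5 < sphericalSide 3 α + sphericalSide 3 (Real.pi - α) := by
  have hπ : 0 < Real.pi := Real.pi_pos
  set x : ℝ := Real.cos (α / 2) ^ 2 with hx
  have hcos23 : Real.cos (2 * Real.pi / 3) = -(1/2) := by
    rw [show (2 : ℝ) * Real.pi / 3 = Real.pi - Real.pi / 3 by ring, Real.cos_pi_sub,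
      Real.cos_pi_div_three]
  have hsin2 : Real.sin (α / 2) ^ 2 = 1 - x := by
    rw [hx, Real.sin_sq]
  -- range of x
  have hα6 : Real.pi / 6 < α / 2 := by linarith
  have hα4 : α / 2 ≤ Real.pi / 4 := by linarith
  have hcoslb : Real.sqrt 2 / 2 ≤ Real.cos (α / 2) := by
    rw [← Real.cos_pi_div_four]
    apply Real.cos_le_cos_of_nonneg_of_le_pi (by linarith) (by linarith) hα4
  have hcosub : Real.cos (α / 2) < Real.sqrt 3 / 2 := by
    rw [← Real.cos_pi_div_six]
    apply Real.cos_lt_cos_of_nonneg_of_le_pi (by positivity) (by linarith) hα6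
  have hs2 : Real.sqrt 2 ^ 2 = 2 := Real.sq_sqrt (by norm_num)
  have hs3 : Real.sqrt 3 ^ 2 = 3 := Real.sq_sqrt (by norm_num)
  have hs2pos : 0 < Real.sqrt 2 := Real.sqrt_pos.2 (by norm_num)
  have hx1 : 1/2 ≤ x := by rw [hx]; nlinarith
  have hx2 : x < 3/4 := by
    rw [hx]
    nlinarith [hcoslb, hcosub, hs2pos]
  -- rewrite the two side lengths
  have e1 : sphericalSide 3 α = Real.arccos ((x - 1/2) / (1 - x)) := by
    unfold sphericalSide
    norm_num
    rw [hcos23, hsin2]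
    congr 1
    rw [hx]
    ring_nf
  have e2 : sphericalSide 3 (Real.pi - α) = Real.arccos ((1/2 - x) / x) := by
    unfold sphericalSide
    norm_num
    rw [hcos23]
    rw [show (Real.pi - α) / 2 = Real.pi / 2 - α / 2 by ring, Real.cos_pi_div_two_sub,
      Real.sin_pi_div_two_sub]
    have : Real.sin (α / 2) ^ 2 = 1 - x := hsin2
    rw [this]
    congr 1
    rw [hx]
    ring_nf
  rw [e1, e2]
  have hmain := sum_gt hx1 hx2
  have hnum := numeric_arccos
  constructor
  · linarith
  · nlinarith [hπ]
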